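/- Among all trees on n ≥ 2 vertices, the star K_{1,n-1} has the minimum Wiener index, namely (n-1)². -/

import Mathlib

/-- The star `K_{1,n-1}` on `Fin n`: the vertex with value `0` is adjacent to
all others. -/
def starGraph (n : ℕ) : SimpleGraph (Fin n) where
  Adj u v := u ≠ v ∧ (u.val = 0 ∨ v.val = 0)
  symm := ⟨fun u v h => ⟨h.1.symm, h.2.symm⟩⟩
  loopless := ⟨fun u h => h.1 rfl⟩

instance (n : ℕ) : DecidableRel (starGraph n).Adj := fun u v =>
  inferInstanceAs (Decidable (u ≠ v ∧ (u.val = 0 ∨ v.val = 0)))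

lemma star_connected (n : ℕ) (hn : 2 ≤ n) : (starGraph n).Connected := by
  have h0 : (0 : ℕ) < n := by omega
  haveI : Nonempty (Fin n) := ⟨⟨0, h0⟩⟩
  apply SimpleGraph.Connected.mk
  intro u v
  have key : ∀ w : Fin n, (starGraph n).Reachable w ⟨0, h0⟩ := by
    intro w
    by_cases hw : w = ⟨0, h0⟩
    · exact hw ▸ SimpleGraph.Reachable.refl _
    · exact SimpleGraph.Adj.reachable ⟨hw, Or.inr rfl⟩
  exact (key u).trans (key v).symm

lemma star_acyclic (n : ℕ) : (starGraph n).IsAcyclic := by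
  intro v c hc
  have h3 := hc.three_le_length
  cases c with
  | nil => simp at h3
  | cons h₁ q =>
    rename_i a
    cases q with
    | nil => simp at h3
    | cons h₂ q' =>
      rename_i b
      cases q' with
      | nil => simp at h3
      | cons h₃ q'' =>
        rename_i d
        have htrail := hc.isTrail.edges_nodup
        simp only [SimpleGraph.Walk.edges_cons, List.nodup_cons, List.mem_cons] at htrail
        have hvb : v ≠ b := by
          intro h; subst h
          exact htrail.1 (Or.inl (Sym2.eq_swap))
        have had : a ≠ d := by
          intro h; subst h
          exact htrail.2.1 (Or.inl (Sym2.eq_swap))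
        have h1 := h₁.2
        have h2 := h₂.2
        have h3' := h₃.2
        have hab := h₂.1
        rw [Fin.ne_iff_vne] at hvb had hab
        omega

lemma star_isTree (n : ℕ) (hn : 2 ≤ n) : (starGraph n).IsTree :=
  ⟨star_connected n hn, star_acyclic n⟩

lemma star_dist (n : ℕ) (hn : 2 ≤ n) (u v : Fin n) :
    (starGraph n).dist u v
      = if u = v then 0 else if (starGraph n).Adj u v then 1 else 2 := by
  have h0 : (0 : ℕ) < n := by omega
  split_ifs with h1 h2
  · subst h1; exact SimpleGraph.dist_self
  · exact SimpleGraph.dist_eq_one_iff_adj.mpr h2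
  · have hu : u.val ≠ 0 ∧ v.val ≠ 0 := by
      by_contra h
      exact h2 ⟨h1, by tauto⟩
    have hadj1 : (starGraph n).Adj u ⟨0, h0⟩ :=
      ⟨by simp [Fin.ne_iff_vne]; omega, Or.inr rfl⟩
    have hadj2 : (starGraph n).Adj ⟨0, h0⟩ v :=
      ⟨by simp [Fin.ne_iff_vne]; omega, Or.inl rfl⟩
    have hle : (starGraph n).dist u v ≤ 2 := by
      have := SimpleGraph.dist_le (SimpleGraph.Walk.cons hadj1
        (SimpleGraph.Walk.cons hadj2 SimpleGraph.Walk.nil))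
      simpa using this
    have hpos := (star_connected n hn).pos_dist_of_ne h1
    have hne1 : (starGraph n).dist u v ≠ 1 := fun h =>
      h2 (SimpleGraph.dist_eq_one_iff_adj.mp h)
    omega

lemma sum_f {n : ℕ} (G : SimpleGraph (Fin n)) [DecidableRel G.Adj]
    (hcard : G.edgeFinset.card + 1 = n) :
    (∑ u : Fin n, ∑ v : Fin n, (if u = v then 0 else if G.Adj u v then 1 else 2))
      = 2 * (n - 1) ^ 2 := by
  have key : ∀ u v : Fin n,
      (if u = v then 0 else if G.Adj u v then 1 else 2) + (if G.Adj u v then 1 else 0)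
        = (if u = v then (0 : ℕ) else 2) := by
    intro u v
    by_cases h : u = v
    · subst h; simp [G.loopless.irrefl u]
    · by_cases ha : G.Adj u v <;> simp [h, ha]
  have hA : (∑ u : Fin n, ∑ v : Fin n, (if G.Adj u v then (1 : ℕ) else 0))
      = 2 * G.edgeFinset.card := by
    rw [← SimpleGraph.sum_degrees_eq_twice_card_edges]
    refine Finset.sum_congr rfl fun u _ => ?_
    rw [SimpleGraph.degree, SimpleGraph.neighborFinset_eq_filter, Finset.card_filter]
  have hB : (∑ u : Fin n, ∑ v : Fin n, (if u = v then (0 : ℕ) else 2))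
      = n * (2 * n - 2) := by
    have hrow : ∀ u : Fin n, (∑ v : Fin n, (if u = v then (0 : ℕ) else 2)) = 2 * n - 2 := by
      intro u
      have e1 : (∑ v : Fin n, ((if u = v then (0 : ℕ) else 2) + (if u = v then 2 else 0)))
          = 2 * n := by
        have : ∀ v : Fin n,
            ((if u = v then (0 : ℕ) else 2) + (if u = v then 2 else 0)) = 2 := by
          intro v; by_cases h : u = v <;> simp [h]
        simp [this, Finset.sum_const, mul_comm]
      rw [Finset.sum_add_distrib, Finset.sum_ite_eq] at e1
      simp at e1
      omega
    simp [hrow, Finset.sum_const, Fintype.card_fin]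
  have hsum : (∑ u : Fin n, ∑ v : Fin n, (if u = v then 0 else if G.Adj u v then 1 else 2))
      + (∑ u : Fin n, ∑ v : Fin n, (if G.Adj u v then (1 : ℕ) else 0)) = n * (2 * n - 2) := by
    rw [← hB, ← Finset.sum_add_distrib]
    refine Finset.sum_congr rfl fun u _ => ?_
    rw [← Finset.sum_add_distrib]
    exact Finset.sum_congr rfl fun v _ => key u v
  rw [hA] at hsum
  obtain ⟨m, rfl⟩ : ∃ m, n = m + 1 := ⟨n - 1, by omega⟩
  have hm : G.edgeFinset.card = m := by omega
  rw [hm] at hsum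
  have hr : (m + 1) * (2 * (m + 1) - 2) = 2 * m ^ 2 + 2 * m := by
    have : 2 * (m + 1) - 2 = 2 * m := by omega
    rw [this]; ring
  rw [hr] at hsum
  simp only [Nat.add_sub_cancel]
  omega

lemma tree_bound {n : ℕ} (T : SimpleGraph (Fin n)) (hT : T.IsTree) :
    2 * (n - 1) ^ 2 ≤ ∑ u : Fin n, ∑ v : Fin n, T.dist u v := by
  classical
  have hcard : T.edgeFinset.card + 1 = n := by
    have := hT.card_edgeFinset
    rwa [Fintype.card_fin] at this
  rw [← sum_f T hcard]
  refine Finset.sum_le_sum fun u _ => Finset.sum_le_sum fun v _ => ?_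
  by_cases h1 : u = v
  · simp [h1]
  · by_cases h2 : T.Adj u v
    · simp only [h1, if_false, h2, if_true]
      exact SimpleGraph.dist_eq_one_iff_adj.mpr h2 ▸ le_refl _
    · simp only [h1, if_false, h2]
      have hpos := hT.isConnected.pos_dist_of_ne h1
      have hne1 : T.dist u v ≠ 1 := fun h => h2 (SimpleGraph.dist_eq_one_iff_adj.mp h)
      omega

/-- Among trees on `n ≥ 2` vertices, the star has minimum Wiener index,
namely `(n-1)²` (sums over ordered pairs equal twice the Wiener index). -/
theorem star_min_wiener (n : ℕ) (hn : 2 ≤ n) :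
    (starGraph n).IsTree ∧
      (∑ u : Fin n, ∑ v : Fin n, (starGraph n).dist u v) = 2 * (n - 1) ^ 2 ∧
      ∀ T : SimpleGraph (Fin n), T.IsTree →
        2 * (n - 1) ^ 2 ≤ ∑ u : Fin n, ∑ v : Fin n, T.dist u v := by
  refine ⟨star_isTree n hn, ?_, fun T hT => tree_bound T hT⟩
  have hcard : (starGraph n).edgeFinset.card + 1 = n := by
    have := (star_isTree n hn).card_edgeFinset
    rwa [Fintype.card_fin] at this
  rw [← sum_f (starGraph n) hcard]
  exact Finset.sum_congr rfl fun u _ => Finset.sum_congr rfl fun v _ => star_dist n hn u v
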